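/- For every depth d ∈ ℕ and all n⁻, n⁰, n⁺ ∈ ℕ^p, the BART sub-correlation function satisfies 1 − P_d ≤ k_d(n⁻, n⁰, n⁺) ≤ 1. -/

import Mathlib

/-- Total weight `W(v) = Σ_{i : v_i ≠ 0} w_i` of the axes with at least one available split. -/
noncomputable def bartW (p : ℕ) (w : Fin p → ℝ) (v : Fin p → ℕ) : ℝ :=
  ∑ i ∈ Finset.univ.filter (fun i => v i ≠ 0), w i

/-- The BART sub-correlation function `k_d(n⁻, n⁰, n⁺)`, defined by well-founded recursion
on `Σ_i (n⁻_i + n⁺_i)`. -/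
noncomputable def bartK (p : ℕ) (w : Fin p → ℝ) (P : ℕ → ℝ)
    (d : ℕ) (nm n0 np : Fin p → ℕ) : ℝ :=
  if ∀ i, nm i + n0 i + np i = 0 then 1
  else
    1 - P d * (1 - (1 / bartW p w (fun i => nm i + n0 i + np i)) *
      ∑ i ∈ Finset.univ.filter (fun i => nm i + n0 i + np i ≠ 0),
        (w i / ((nm i + n0 i + np i : ℕ) : ℝ)) *
          ((∑ k ∈ (Finset.range (nm i)).attach,
              bartK p w P (d+1) (Function.update nm i k.1) n0 np) +
           (∑ k ∈ (Finset.range (np i)).attach,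
              bartK p w P (d+1) nm n0 (Function.update np i k.1))))
termination_by ∑ i, (nm i + np i)
decreasing_by
  · have hk : k.1 < nm i := Finset.mem_range.mp k.2
    refine Finset.sum_lt_sum (fun j _ => ?_) ⟨i, Finset.mem_univ i, ?_⟩
    · rcases eq_or_ne j i with rfl | hj
      · simp only [Function.update_self]; omega
      · simp only [Function.update_of_ne hj]; omega
    · simp only [Function.update_self]; omega
  · have hk : k.1 < np i := Finset.mem_range.mp k.2
    refine Finset.sum_lt_sum (fun j _ => ?_) ⟨i, Finset.mem_univ i, ?_⟩
    · rcases eq_or_ne j i with rfl | hj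
      · simp only [Function.update_self]; omega
      · simp only [Function.update_of_ne hj]; omega
    · simp only [Function.update_self]; omega

/-- Property 3 of Theorem 2: `1 - P_d ≤ k_d(n⁻, n⁰, n⁺) ≤ 1`. -/
theorem bartK_bounds
    (p : ℕ) (hp : 1 ≤ p) (w : Fin p → ℝ) (hw : ∀ i, 0 < w i)
    (P : ℕ → ℝ) (hP : ∀ d, P d ∈ Set.Icc (0 : ℝ) 1)
    (d : ℕ) (nm n0 np : Fin p → ℕ) :
    1 - P d ≤ bartK p w P d nm n0 np ∧ bartK p w P d nm n0 np ≤ 1 := by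
  suffices H : ∀ N d (nm n0 np : Fin p → ℕ), (∑ i, (nm i + np i)) = N →
      1 - P d ≤ bartK p w P d nm n0 np ∧ bartK p w P d nm n0 np ≤ 1 from
    H _ d nm n0 np rfl
  intro N
  induction N using Nat.strong_induction_on with
  | _ N ih =>
  intro d nm n0 np hN
  rw [bartK]
  by_cases h0 : ∀ i, nm i + n0 i + np i = 0
  · rw [if_pos h0]
    exact ⟨by linarith [(hP d).1], le_refl 1⟩
  · rw [if_neg h0]
    push_neg at h0
    obtain ⟨i0, hi0⟩ := h0
    set F := Finset.univ.filter (fun i => nm i + n0 i + np i ≠ 0) with hF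
    set Wv := bartW p w (fun i => nm i + n0 i + np i) with hWv
    have hWpos : 0 < Wv := by
      refine Finset.sum_pos (fun j _ => hw j) ⟨i0, ?_⟩
      exact Finset.mem_filter.mpr ⟨Finset.mem_univ i0, hi0⟩
    -- bounds on each summand
    have hterm : ∀ i ∈ F, (0 : ℝ) ≤
        (w i / ((nm i + n0 i + np i : ℕ) : ℝ)) *
          ((∑ k ∈ (Finset.range (nm i)).attach,
              bartK p w P (d+1) (Function.update nm i k.1) n0 np) +
           (∑ k ∈ (Finset.range (np i)).attach,
              bartK p w P (d+1) nm n0 (Function.update np i k.1))) ∧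
        (w i / ((nm i + n0 i + np i : ℕ) : ℝ)) *
          ((∑ k ∈ (Finset.range (nm i)).attach,
              bartK p w P (d+1) (Function.update nm i k.1) n0 np) +
           (∑ k ∈ (Finset.range (np i)).attach,
              bartK p w P (d+1) nm n0 (Function.update np i k.1))) ≤ w i := by
      intro i hi
      have hni : nm i + n0 i + np i ≠ 0 := (Finset.mem_filter.mp hi).2
      have hA : ∀ k ∈ (Finset.range (nm i)).attach,
          0 ≤ bartK p w P (d+1) (Function.update nm i k.1) n0 np ∧
          bartK p w P (d+1) (Function.update nm i k.1) n0 np ≤ 1 := by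
        intro k _
        have hk : k.1 < nm i := Finset.mem_range.mp k.2
        have hlt : (∑ j, (Function.update nm i k.1 j + np j)) < N := by
          rw [← hN]
          refine Finset.sum_lt_sum (fun j _ => ?_) ⟨i, Finset.mem_univ i, ?_⟩
          · rcases eq_or_ne j i with rfl | hj
            · simp only [Function.update_self]; omega
            · simp only [Function.update_of_ne hj]; omega
          · simp only [Function.update_self]; omega
        have := ih _ hlt (d+1) _ n0 np rfl
        exact ⟨by linarith [(hP (d+1)).2, this.1], this.2⟩
      have hB : ∀ k ∈ (Finset.range (np i)).attach,
          0 ≤ bartK p w P (d+1) nm n0 (Function.update np i k.1) ∧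
          bartK p w P (d+1) nm n0 (Function.update np i k.1) ≤ 1 := by
        intro k _
        have hk : k.1 < np i := Finset.mem_range.mp k.2
        have hlt : (∑ j, (nm j + Function.update np i k.1 j)) < N := by
          rw [← hN]
          refine Finset.sum_lt_sum (fun j _ => ?_) ⟨i, Finset.mem_univ i, ?_⟩
          · rcases eq_or_ne j i with rfl | hj
            · simp only [Function.update_self]; omega
            · simp only [Function.update_of_ne hj]; omega
          · simp only [Function.update_self]; omega
        have := ih _ hlt (d+1) nm n0 _ rfl
        exact ⟨by linarith [(hP (d+1)).2, this.1], this.2⟩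
      have hA0 : 0 ≤ ∑ k ∈ (Finset.range (nm i)).attach,
          bartK p w P (d+1) (Function.update nm i k.1) n0 np :=
        Finset.sum_nonneg (fun k hk => (hA k hk).1)
      have hB0 : 0 ≤ ∑ k ∈ (Finset.range (np i)).attach,
          bartK p w P (d+1) nm n0 (Function.update np i k.1) :=
        Finset.sum_nonneg (fun k hk => (hB k hk).1)
      have hA1 : (∑ k ∈ (Finset.range (nm i)).attach,
          bartK p w P (d+1) (Function.update nm i k.1) n0 np) ≤ (nm i : ℝ) := by
        calc _ ≤ ∑ _k ∈ (Finset.range (nm i)).attach, (1 : ℝ) :=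
              Finset.sum_le_sum (fun k hk => (hA k hk).2)
          _ = (nm i : ℝ) := by simp
      have hB1 : (∑ k ∈ (Finset.range (np i)).attach,
          bartK p w P (d+1) nm n0 (Function.update np i k.1)) ≤ (np i : ℝ) := by
        calc _ ≤ ∑ _k ∈ (Finset.range (np i)).attach, (1 : ℝ) :=
              Finset.sum_le_sum (fun k hk => (hB k hk).2)
          _ = (np i : ℝ) := by simp
      have hnpos : (0 : ℝ) < ((nm i + n0 i + np i : ℕ) : ℝ) := by
        exact_mod_cast Nat.pos_of_ne_zero hni
      have hwn : 0 ≤ w i / ((nm i + n0 i + np i : ℕ) : ℝ) :=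
        div_nonneg (hw i).le hnpos.le
      constructor
      · exact mul_nonneg hwn (by linarith)
      · have hle : (nm i : ℝ) + (np i : ℝ) ≤ ((nm i + n0 i + np i : ℕ) : ℝ) := by
          push_cast; linarith [Nat.cast_nonneg (α := ℝ) (n0 i)]
        calc (w i / ((nm i + n0 i + np i : ℕ) : ℝ)) * _
            ≤ (w i / ((nm i + n0 i + np i : ℕ) : ℝ)) * ((nm i + n0 i + np i : ℕ) : ℝ) := by
              apply mul_le_mul_of_nonneg_left _ hwn
              linarith
          _ = w i := div_mul_cancel₀ _ hnpos.ne'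
    set S := ∑ i ∈ F,
        (w i / ((nm i + n0 i + np i : ℕ) : ℝ)) *
          ((∑ k ∈ (Finset.range (nm i)).attach,
              bartK p w P (d+1) (Function.update nm i k.1) n0 np) +
           (∑ k ∈ (Finset.range (np i)).attach,
              bartK p w P (d+1) nm n0 (Function.update np i k.1))) with hS
    have hS0 : 0 ≤ S := Finset.sum_nonneg (fun i hi => (hterm i hi).1)
    have hSW : S ≤ Wv := Finset.sum_le_sum (fun i hi => (hterm i hi).2)
    have h1 : (1 / Wv) * S ≤ 1 := by
      rw [one_div, ← inv_mul_cancel₀ hWpos.ne']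
      exact mul_le_mul_of_nonneg_left hSW (inv_nonneg.mpr hWpos.le)
    have h2 : 0 ≤ (1 / Wv) * S := mul_nonneg (by positivity) hS0
    have hPd0 := (hP d).1
    have hPd1 := (hP d).2
    constructor
    · nlinarith
    · nlinarith
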